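/- Let ψ : [1,∞) → ℝ be positive, convex, differentiable with ψ'(t) < 0 for all t ≥ 1, and ψ(t) → 0 as t → ∞; set λ(t) = ψ(t)/|ψ'(t)| and α(t) = ψ(t)/(t·|ψ'(t)|). Assume λ is nondecreasing and α is nonincreasing on [1,∞). Then for every n ∈ ℕ (n ≥ 1) with α(n) ≤ 1/4, one has ψ(n)·λ(n) ≤ Σ_{k=n}^∞ ψ(k) ≤ ψ(n)·λ(n)·(1 + (4/3)·α(n)) + ψ(n). -/

import Mathlib

open MeasureTheory Real Filter Topology

set_option maxHeartbeats 1000000 in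
/-- Under the `𝔐`-type conditions on `ψ`, with `λ(t) = ψ(t)/|ψ'(t)|`
nondecreasing and `α(t) = ψ(t)/(t|ψ'(t)|)` nonincreasing, if `n ≥ 1` and `α(n) ≤ 1/4` then
`ψ(n)λ(n) ≤ Σ_{k=n}^∞ ψ(k) ≤ ψ(n)λ(n)(1 + (4/3)α(n)) + ψ(n)`. -/
theorem sum_psi_two_sided (ψ ψ' : ℝ → ℝ)
    (hpos : ∀ t, 1 ≤ t → 0 < ψ t)
    (hconv : ConvexOn ℝ (Set.Ici (1 : ℝ)) ψ)
    (hderiv : ∀ t, 1 ≤ t → HasDerivAt ψ (ψ' t) t)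
    (hneg : ∀ t, 1 ≤ t → ψ' t < 0)
    (hlim : Filter.Tendsto ψ Filter.atTop (nhds 0))
    (hlam_mono : ∀ s t, 1 ≤ s → s ≤ t → ψ s / |ψ' s| ≤ ψ t / |ψ' t|)
    (halp_anti : ∀ s t, 1 ≤ s → s ≤ t → ψ t / (t * |ψ' t|) ≤ ψ s / (s * |ψ' s|))
    (n : ℕ) (hn : 1 ≤ n) (hα : ψ (n : ℝ) / ((n : ℝ) * |ψ' (n : ℝ)|) ≤ 1 / 4) :
    ψ (n : ℝ) * (ψ (n : ℝ) / |ψ' (n : ℝ)|) ≤ (∑' k : ℕ, ψ ((k + n : ℕ) : ℝ)) ∧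
      (∑' k : ℕ, ψ ((k + n : ℕ) : ℝ)) ≤
        ψ (n : ℝ) * (ψ (n : ℝ) / |ψ' (n : ℝ)|) *
            (1 + (4 / 3) * (ψ (n : ℝ) / ((n : ℝ) * |ψ' (n : ℝ)|))) + ψ (n : ℝ) := by
  set N : ℝ := (n : ℝ) with hNdef
  have hN1 : (1 : ℝ) ≤ N := by rw [hNdef]; exact_mod_cast hn
  have hN0 : (0 : ℝ) < N := lt_of_lt_of_le one_pos hN1
  have hψN : 0 < ψ N := hpos N hN1
  have hdN : ψ' N < 0 := hneg N hN1
  have haN : 0 < |ψ' N| := abs_pos.2 hdN.ne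
  set a : ℝ := |ψ' N| with hadef
  set lam : ℝ := ψ N / a with hlamdef
  set α : ℝ := ψ N / (N * a) with hαdef
  have hαpos : 0 < α := div_pos hψN (mul_pos hN0 haN)
  have hlam_eq : lam = N * α := by
    rw [hlamdef, hαdef]; field_simp
  set c : ℝ := 1 / α with hcdef
  have hc4 : (4 : ℝ) ≤ c := by
    rw [hcdef, le_div_iff₀ hαpos]; linarith
  have hcα : c * α = 1 := by
    rw [hcdef]; field_simp
  -- strict antitonicity of ψ
  have hanti : ∀ s t : ℝ, 1 ≤ s → s < t → ψ t < ψ s := by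
    intro s t hs hst
    have h1 : slope ψ s t ≤ ψ' t :=
      hconv.slope_le_of_hasDerivAt hs (hs.trans hst.le) hst (hderiv t (hs.trans hst.le))
    rw [slope_def_field] at h1
    have h2 := hneg t (hs.trans hst.le)
    have h3 : (ψ t - ψ s) / (t - s) < 0 := lt_of_le_of_lt h1 h2
    have h4 : 0 < t - s := by linarith
    nlinarith [(div_lt_iff₀ h4).1 h3]
  have hanti' : ∀ s t : ℝ, 1 ≤ s → s ≤ t → ψ t ≤ ψ s := by
    intro s t hs hst
    rcases eq_or_lt_of_le hst with rfl | h
    · exact le_rfl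
    · exact (hanti s t hs h).le
  -- pointwise bound : ψ t ≤ ψ N * N^c * t^(-c) for N ≤ t
  have hub : ∀ t : ℝ, N ≤ t → ψ t ≤ ψ N * N ^ c * t ^ (-c) := by
    have hH : ∀ t : ℝ, 1 ≤ t →
        HasDerivAt (fun x : ℝ => x ^ c * ψ x) (c * t ^ (c - 1) * ψ t + t ^ c * ψ' t) t := by
      intro t ht
      have h0 : t ≠ 0 := by positivity
      exact (Real.hasDerivAt_rpow_const (Or.inl h0)).mul (hderiv t ht)
    have hAnti : AntitoneOn (fun x : ℝ => x ^ c * ψ x) (Set.Ici N) := by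
      apply antitoneOn_of_deriv_nonpos (convex_Ici N)
      · intro t ht
        exact (hH t (hN1.trans ht)).continuousAt.continuousWithinAt
      · rw [interior_Ici]
        intro t ht
        exact (hH t (hN1.trans (le_of_lt ht))).differentiableAt.differentiableWithinAt
      · rw [interior_Ici]
        intro t ht
        have ht1 : 1 ≤ t := hN1.trans (le_of_lt ht)
        have ht0 : 0 < t := lt_of_lt_of_le one_pos ht1
        rw [(hH t ht1).deriv]
        -- show c * t ^ (c-1) * ψ t + t ^ c * ψ' t ≤ 0
        have hψ't : ψ' t < 0 := hneg t ht1
        have habs : |ψ' t| = -ψ' t := abs_of_neg hψ't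
        have halp := halp_anti N t hN1 (le_of_lt ht)
        have hta : 0 < t * |ψ' t| := mul_pos ht0 (abs_pos.2 hψ't.ne)
        have h1 : ψ t ≤ α * (t * |ψ' t|) := by
          have := (div_le_iff₀ hta).1 halp
          linarith
        have h2 : c * ψ t + t * ψ' t ≤ 0 := by
          have := mul_le_mul_of_nonneg_left h1 (le_of_lt (by positivity : (0:ℝ) < c))
          rw [← mul_assoc, hcα, one_mul] at this
          rw [habs] at this
          nlinarith
        have h3 : t ^ c = t ^ (c - 1) * t := by
          rw [← Real.rpow_add_one ht0.ne' (c - 1)]; ring_nf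
        have h4 : (0:ℝ) ≤ t ^ (c - 1) := Real.rpow_nonneg ht0.le _
        calc c * t ^ (c - 1) * ψ t + t ^ c * ψ' t
            = t ^ (c - 1) * (c * ψ t + t * ψ' t) := by rw [h3]; ring
        _ ≤ 0 := mul_nonpos_of_nonneg_of_nonpos h4 h2
    intro t ht
    have key : t ^ c * ψ t ≤ N ^ c * ψ N :=
      hAnti Set.self_mem_Ici (by exact ht) ht
    have ht0 : 0 < t := lt_of_lt_of_le hN0 ht
    have htc : 0 < t ^ c := Real.rpow_pos_of_pos ht0 c
    rw [Real.rpow_neg ht0.le]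
    have h5 : ψ t ≤ (N ^ c * ψ N) / t ^ c :=
      (le_div_iff₀ htc).2 (by rw [mul_comm]; exact key)
    calc ψ t ≤ (N ^ c * ψ N) / t ^ c := h5
    _ = ψ N * N ^ c * (t ^ c)⁻¹ := by ring
  -- casting helper
  have hcast : ∀ k : ℕ, ((k + n : ℕ) : ℝ) = (k : ℝ) + N := by
    intro k; rw [hNdef]; push_cast; ring
  have hterm_nonneg : ∀ k : ℕ, 0 ≤ ψ ((k + n : ℕ) : ℝ) := by
    intro k
    apply (hpos _ _).le
    rw [hcast]; have := Nat.cast_nonneg (α := ℝ) k; linarith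
  -- summability
  have hSum_aux : Summable (fun k : ℕ => ((k + n : ℕ) : ℝ) ^ (-c)) := by
    have h : Summable (fun m : ℕ => (m : ℝ) ^ (-c)) := Real.summable_nat_rpow.2 (by linarith)
    exact (summable_nat_add_iff n).2 h
  have hS : Summable (fun k : ℕ => ψ ((k + n : ℕ) : ℝ)) := by
    apply Summable.of_nonneg_of_le hterm_nonneg _ (hSum_aux.mul_left (ψ N * N ^ c))
    intro k
    rw [hcast k]
    exact hub _ (by have := Nat.cast_nonneg (α := ℝ) k; linarith)
  -- integrability of the majorant and of ψ
  have hg_int : IntegrableOn (fun t : ℝ => ψ N * N ^ c * t ^ (-c)) (Set.Ioi N) :=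
    (integrableOn_Ioi_rpow_of_lt (by linarith : -c < -1) hN0).const_mul _
  have hψmeas : AEStronglyMeasurable ψ (volume.restrict (Set.Ioi N)) := by
    apply ContinuousOn.aestronglyMeasurable _ measurableSet_Ioi
    intro t ht
    exact (hderiv t (hN1.trans (le_of_lt ht))).continuousAt.continuousWithinAt
  have hψ_int : IntegrableOn ψ (Set.Ioi N) := by
    apply Integrable.mono' hg_int hψmeas
    filter_upwards [ae_restrict_mem measurableSet_Ioi] with t ht
    rw [Real.norm_eq_abs, abs_of_pos (hpos t (hN1.trans ht.le))]
    exact hub t ht.le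
  -- improper FTC for ψ'
  have hψ'int_eq : ∫ x in Set.Ioi N, ψ' x = 0 - ψ N :=
    integral_Ioi_of_hasDerivAt_of_nonpos' (fun x hx => hderiv x (hN1.trans hx))
      (fun x hx => (hneg x (hN1.trans (le_of_lt hx))).le) hlim
  have hψ'int : IntegrableOn ψ' (Set.Ioi N) :=
    integrableOn_Ioi_deriv_of_nonpos' (fun x hx => hderiv x (hN1.trans hx))
      (fun x hx => (hneg x (hN1.trans (le_of_lt hx))).le) hlim
  -- lower bound on the integral of ψ
  have hlow_int : lam * ψ N ≤ ∫ x in Set.Ioi N, ψ x := by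
    have h1 : ∫ x in Set.Ioi N, lam * (-ψ' x) = lam * ψ N := by
      rw [integral_const_mul, integral_neg, hψ'int_eq]; ring
    rw [← h1]
    apply setIntegral_mono_on ((hψ'int.neg).const_mul lam) hψ_int measurableSet_Ioi
    intro t ht
    have ht1 : 1 ≤ t := hN1.trans ht.le
    have h2 := hlam_mono N t hN1 ht.le
    have habs : |ψ' t| = -ψ' t := abs_of_neg (hneg t ht1)
    have hpos' : 0 < |ψ' t| := abs_pos.2 (hneg t ht1).ne
    have h3 := (le_div_iff₀ hpos').1 h2
    rw [habs] at h3
    simpa only [hlamdef, hadef, Pi.neg_apply] using h3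
  -- upper bound on the integral of ψ
  have hup_int : ∫ x in Set.Ioi N, ψ x ≤ ψ N * N / (c - 1) := by
    have h1 : ∫ x in Set.Ioi N, ψ x ≤ ∫ x in Set.Ioi N, ψ N * N ^ c * x ^ (-c) := by
      apply setIntegral_mono_on hψ_int hg_int measurableSet_Ioi
      intro t ht; exact hub t ht.le
    have h2 : ∫ x in Set.Ioi N, ψ N * N ^ c * x ^ (-c)
        = ψ N * N ^ c * (-N ^ (-c + 1) / (-c + 1)) := by
      rw [integral_const_mul, integral_Ioi_rpow_of_lt (by linarith) hN0]
    have h3 : N ^ c * N ^ (-c + 1) = N := by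
      rw [← Real.rpow_add hN0, show c + (-c + 1) = (1 : ℝ) by ring, Real.rpow_one]
    calc ∫ x in Set.Ioi N, ψ x ≤ ψ N * N ^ c * (-N ^ (-c + 1) / (-c + 1)) := by rw [← h2]; exact h1
    _ = ψ N * (N ^ c * N ^ (-c + 1)) / (c - 1) := by
        rw [show (-c + 1 : ℝ) = -(c - 1) by ring, div_neg, neg_div, neg_neg]
        ring
    _ = ψ N * N / (c - 1) := by rw [h3]
  -- antitone on finite intervals
  have hAntiIcc : ∀ K : ℕ, AntitoneOn ψ (Set.Icc N (N + K)) := fun K s hs t ht hst =>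
    hanti' s t (hN1.trans hs.1) hst
  -- bridge 1 : integral ≤ tsum
  have hbridge1 : ∫ x in Set.Ioi N, ψ x ≤ ∑' k : ℕ, ψ ((k + n : ℕ) : ℝ) := by
    have hlim2 : Tendsto (fun K : ℕ => ∫ x in N..(N + K), ψ x) atTop
        (𝓝 (∫ x in Set.Ioi N, ψ x)) :=
      intervalIntegral_tendsto_integral_Ioi N hψ_int
        (tendsto_atTop_add_const_left _ _ tendsto_natCast_atTop_atTop)
    apply le_of_tendsto hlim2
    filter_upwards with K
    calc ∫ x in N..(N + K), ψ x ≤ ∑ i ∈ Finset.range K, ψ (N + i) :=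
      (hAntiIcc K).integral_le_sum
    _ = ∑ i ∈ Finset.range K, ψ ((i + n : ℕ) : ℝ) := by
        apply Finset.sum_congr rfl; intro i _; rw [hcast i, add_comm]
    _ ≤ ∑' k : ℕ, ψ ((k + n : ℕ) : ℝ) := Summable.sum_le_tsum _ (fun i _ => hterm_nonneg i) hS
  -- bridge 2 : tsum ≤ ψ N + integral
  have hbridge2 : (∑' k : ℕ, ψ ((k + n : ℕ) : ℝ)) ≤ ψ N + ∫ x in Set.Ioi N, ψ x := by
    rw [Summable.tsum_eq_zero_add hS]
    have h0 : ψ (((0 : ℕ) + n : ℕ) : ℝ) = ψ N := by norm_num [hNdef]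
    rw [h0]
    apply add_le_add_right
    apply Summable.tsum_le_of_sum_range_le ((summable_nat_add_iff 1).2 hS)
    intro K
    calc ∑ i ∈ Finset.range K, ψ (((i + 1) + n : ℕ) : ℝ)
        = ∑ i ∈ Finset.range K, ψ (N + ((i + 1 : ℕ) : ℝ)) := by
          apply Finset.sum_congr rfl; intro i _; congr 1; rw [hNdef]; push_cast; ring
    _ ≤ ∫ x in N..(N + K), ψ x := (hAntiIcc K).sum_le_integral
    _ ≤ ∫ x in Set.Ioi N, ψ x := by
        rw [intervalIntegral.integral_of_le (le_add_of_nonneg_right (Nat.cast_nonneg K))]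
        apply setIntegral_mono_set hψ_int
        · filter_upwards [ae_restrict_mem measurableSet_Ioi] with t ht
          exact (hpos t (hN1.trans ht.le)).le
        · exact (Set.Ioc_subset_Ioi_self).eventuallyLE
  constructor
  · calc ψ N * lam = lam * ψ N := by ring
    _ ≤ ∫ x in Set.Ioi N, ψ x := hlow_int
    _ ≤ _ := hbridge1
  · calc (∑' k : ℕ, ψ ((k + n : ℕ) : ℝ)) ≤ ψ N + ∫ x in Set.Ioi N, ψ x := hbridge2
    _ ≤ ψ N + ψ N * N / (c - 1) := by linarith
    _ ≤ ψ N * lam * (1 + 4 / 3 * α) + ψ N := by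
        have hc1 : (0 : ℝ) < c - 1 := by linarith
        have key : ψ N * N / (c - 1) ≤ ψ N * lam * (1 + 4 / 3 * α) := by
          rw [hlam_eq, div_le_iff₀ hc1]
          have h6 : α * (c - 1) = 1 - α := by linear_combination hcα
          have h7 : (1 : ℝ) ≤ (1 - α) * (1 + 4 / 3 * α) := by
            nlinarith [mul_nonneg hαpos.le (by linarith : (0:ℝ) ≤ 1 - 4 * α)]
          calc ψ N * N = ψ N * N * 1 := by ring
          _ ≤ ψ N * N * ((1 - α) * (1 + 4 / 3 * α)) :=
              mul_le_mul_of_nonneg_left h7 (mul_nonneg hψN.le hN0.le)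
          _ = ψ N * (N * α) * (1 + 4 / 3 * α) * (c - 1) := by rw [← h6]; ring
        linarith
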